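/- arXiv:0805.3845 — 5 statements merged into one kernel-verified Lean document; each statement's English description precedes it below -/
import Mathlib

section
/- Let H be a symmetric positive definite n×n real matrix with trace 1, where n ≥ 3. Then there exists a constant A > 0 depending only on n such that det(H)^{1/2} / det(I - H) ≤ (n / (n-1)^2)^{n/2} · (1 - A · Σᵢ (λᵢ - 1/n)²), where λ₁, ..., λₙ are the eigenvalues of H. -/
/- Auxiliary material for the Besson-Courtois-Gallot Appendix B5 linear-algebra lemma.
   The proof reduces to the scalar inequality
   `prod l <= (n/(n-1)^2)^n (1 - S/500) (prod (1-l))^2` for positive `l` summing to `1`,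
   where `S = sum (l i - 1/n)^2`, proved by a convexity/tangent-line argument when all
   `l i <= 1/2`, and by explicit AM-GM style estimates otherwise. -/

open Real Set

section BCGAux

lemma tangent_le {f f' : ℝ → ℝ} {a b : ℝ}
    (hd : ∀ x ∈ Set.Icc a b, HasDerivAt f (f' x) x)
    (hmono : ∀ x ∈ Set.Icc a b, ∀ y ∈ Set.Icc a b, x ≤ y → f' x ≤ f' y)
    {x₀ x : ℝ} (hx₀ : x₀ ∈ Set.Icc a b) (hx : x ∈ Set.Icc a b) :
    f x₀ + f' x₀ * (x - x₀) ≤ f x := by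
  have hcont : ∀ (u v : ℝ), u ∈ Set.Icc a b → v ∈ Set.Icc a b →
      ContinuousOn f (Set.Icc u v) := fun u v hu hv =>
    fun y hy => ((hd y ⟨hu.1.trans hy.1, hy.2.trans hv.2⟩).continuousAt).continuousWithinAt
  rcases lt_trichotomy x x₀ with h | h | h
  · obtain ⟨c, hc, hceq⟩ := exists_hasDerivAt_eq_slope f f' h (hcont x x₀ hx hx₀)
      (fun y hy => hd y ⟨hx.1.trans hy.1.le, hy.2.le.trans hx₀.2⟩)
    have hcI : c ∈ Set.Icc a b := ⟨hx.1.trans hc.1.le, hc.2.le.trans hx₀.2⟩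
    have hle : f' c ≤ f' x₀ := hmono c hcI x₀ hx₀ hc.2.le
    rw [eq_div_iff (sub_ne_zero.2 h.ne')] at hceq
    nlinarith [hceq, hle]
  · subst h; simp only [sub_self, mul_zero, add_zero, le_refl]
  · obtain ⟨c, hc, hceq⟩ := exists_hasDerivAt_eq_slope f f' h (hcont x₀ x hx₀ hx)
      (fun y hy => hd y ⟨hx₀.1.trans hy.1.le, hy.2.le.trans hx.2⟩)
    have hcI : c ∈ Set.Icc a b := ⟨hx₀.1.trans hc.1.le, hc.2.le.trans hx.2⟩
    have hle : f' x₀ ≤ f' c := hmono x₀ hx₀ c hcI hc.1.le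
    rw [eq_div_iff (sub_ne_zero.2 h.ne')] at hceq
    nlinarith [hceq, hle]

/-- MVT-based monotonicity on Icc. -/

lemma mvt_mono {f f' : ℝ → ℝ} {a b : ℝ}
    (hd : ∀ x ∈ Set.Icc a b, HasDerivAt f (f' x) x)
    (hpos : ∀ x ∈ Set.Icc a b, 0 ≤ f' x)
    {x y : ℝ} (hx : x ∈ Set.Icc a b) (hy : y ∈ Set.Icc a b) (hxy : x ≤ y) :
    f x ≤ f y := by
  rcases eq_or_lt_of_le hxy with h | h
  · exact le_of_eq (congrArg f h)
  · obtain ⟨c, hc, hceq⟩ := exists_hasDerivAt_eq_slope f f' h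
      (fun z hz => ((hd z ⟨hx.1.trans hz.1, hz.2.trans hy.2⟩).continuousAt).continuousWithinAt)
      (fun z hz => hd z ⟨hx.1.trans hz.1.le, hz.2.le.trans hy.2⟩)
    have hcI : c ∈ Set.Icc a b := ⟨hx.1.trans hc.1.le, hc.2.le.trans hy.2⟩
    have h0 : 0 ≤ f' c := hpos c hcI
    rw [eq_div_iff (sub_ne_zero.2 h.ne')] at hceq
    nlinarith [hceq, h0]

lemma hasDerivG {x : ℝ} (hx : 0 < x) (hx1 : x < 1) :
    HasDerivAt (fun y : ℝ => Real.log y - 2 * Real.log (1 - y)) (1/x + 2/(1-x)) x := by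
  have h1 : HasDerivAt (fun y : ℝ => Real.log y) (1/x) x := by
    simpa [one_div] using Real.hasDerivAt_log hx.ne'
  have h2 : HasDerivAt (fun y : ℝ => (1 : ℝ) - y) (-1) x := by
    simpa using (hasDerivAt_id x).const_sub 1
  have h3 : HasDerivAt (fun y : ℝ => Real.log (1 - y)) (-1 / (1-x)) x :=
    h2.log (by linarith)
  have := h1.sub ((h3.const_mul (2:ℝ)))
  refine this.congr_deriv ?_
  field_simp
  ring

lemma core1 {q t : ℝ} (hq0 : 0 < q) (hq : q ≤ 1/3) (ht0 : 0 < t) (ht : t ≤ 2/5) :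
    (25/72) * (t - q)^2 ≤
      (Real.log q - 2*Real.log (1-q)) - (Real.log t - 2*Real.log (1-t))
        + (1/q + 2/(1-q)) * (t - q) := by
  set a := min t q with ha
  have ha0 : 0 < a := lt_min ht0 hq0
  have hqI : q ∈ Set.Icc a (2/5 : ℝ) := ⟨min_le_right _ _, by linarith⟩
  have htI : t ∈ Set.Icc a (2/5 : ℝ) := ⟨min_le_left _ _, ht⟩
  have key := tangent_le (f := fun x => -(Real.log x - 2*Real.log (1-x)) - (25/72)*x^2)
      (f' := fun x => -(1/x + 2/(1-x)) - (25/36)*x) (a := a) (b := 2/5)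
      (fun x hx => by
        have hx0 : 0 < x := lt_of_lt_of_le ha0 hx.1
        have hx1 : x < 1 := lt_of_le_of_lt hx.2 (by norm_num)
        have h1 := (hasDerivG hx0 hx1).neg
        have h2 : HasDerivAt (fun y : ℝ => (25/72)*y^2) ((25/36)*x) x := by
          have := (hasDerivAt_pow 2 x).const_mul (25/72 : ℝ)
          refine this.congr_deriv ?_
          ring
        exact h1.sub h2)
      (fun x hx y hy hxy => by
        have hx0 : 0 < x := lt_of_lt_of_le ha0 hx.1
        have hy0 : 0 < y := lt_of_lt_of_le ha0 hy.1
        have hx1 : x ≤ 2/5 := hx.2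
        have hy1 : y ≤ 2/5 := hy.2
        have hne1 : (1:ℝ) - x > 0 := by linarith
        have hne2 : (1:ℝ) - y > 0 := by linarith
        have e : (-(1/y + 2/(1-y)) - (25/36)*y) - (-(1/x + 2/(1-x)) - (25/36)*x)
            = (y - x) * (1/(x*y) - 2/((1-x)*(1-y)) - 25/36) := by
          field_simp
          ring
        have hb1 : (25/4 : ℝ) ≤ 1/(x*y) := by
          rw [le_div_iff₀ (by positivity)]
          nlinarith
        have hb2 : 2/((1-x)*(1-y)) ≤ 50/9 := by
          rw [div_le_iff₀ (by nlinarith)]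
          nlinarith
        have hbr : 0 ≤ 1/(x*y) - 2/((1-x)*(1-y)) - 25/36 := by linarith
        have := mul_nonneg (by linarith : (0:ℝ) ≤ y - x) hbr
        linarith [e ▸ this])
      hqI htI
  nlinarith [key]

lemma core {q t : ℝ} (hq0 : 0 < q) (hq : q ≤ 1/3) (ht0 : 0 < t) (ht : t ≤ 1/2) :
    (1/162) * (t - q)^2 ≤
      (Real.log q - 2*Real.log (1-q)) - (Real.log t - 2*Real.log (1-t))
        + (1/q + 2/(1-q)) * (t - q) := by
  by_cases hc : t ≤ 2/5
  · have h := core1 hq0 hq ht0 hc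
    nlinarith [sq_nonneg (t - q)]
  · push_neg at hc
    -- monotone part : F x = 6x - G x is monotone on [2/5, 1/2]
    have hmono : (6:ℝ)*(2/5) - (Real.log (2/5) - 2*Real.log (1 - 2/5))
        ≤ 6*t - (Real.log t - 2*Real.log (1-t)) := by
      have := mvt_mono (f := fun x : ℝ => 6*x - (Real.log x - 2*Real.log (1-x)))
        (f' := fun x : ℝ => 6 - (1/x + 2/(1-x))) (a := 2/5) (b := 1/2)
        (fun x hx => by
          have hx0 : (0:ℝ) < x := lt_of_lt_of_le (by norm_num) hx.1
          have hx1 : x < 1 := lt_of_le_of_lt hx.2 (by norm_num)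
          have h1 : HasDerivAt (fun y : ℝ => 6*y) 6 x := by
            simpa using (hasDerivAt_id x).const_mul (6:ℝ)
          exact h1.sub (hasDerivG hx0 hx1))
        (fun x hx => by
          have hx0 : (0:ℝ) < x := lt_of_lt_of_le (by norm_num) hx.1
          have h15 : (2/5:ℝ) ≤ x := hx.1
          have h12 : x ≤ 1/2 := hx.2
          have h1x : (0:ℝ) < 1 - x := by linarith
          have e : 6 - (1/x + 2/(1-x)) = (1-2*x)*(3*x-1)/(x*(1-x)) := by
            field_simp; ring
          rw [e]
          apply div_nonneg (by nlinarith) (by positivity))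
        (Set.mem_Icc.2 ⟨le_refl _, by norm_num⟩)
        (Set.mem_Icc.2 ⟨hc.le, ht⟩) hc.le
      simpa using this
    have hB : (6:ℝ) ≤ 1/q + 2/(1-q) := by
      have h1q : (0:ℝ) < 1 - q := by linarith
      have e : 1/q + 2/(1-q) - 6 = (1-2*q)*(1-3*q)/(q*(1-q)) := by
        field_simp; ring
      nlinarith [div_nonneg (by nlinarith : (0:ℝ) ≤ (1-2*q)*(1-3*q)) (by positivity : (0:ℝ) ≤ q*(1-q)), e]
    have h25 := core1 hq0 hq (by norm_num : (0:ℝ) < 2/5) (le_refl _)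
    -- P t ≥ P (2/5) + (B - 6)(t - 2/5) ≥ P(2/5), and P(2/5) ≥ 25/72 * (2/5 - q)^2 ≥ 1/648
    -- target : (1/162)(t-q)^2 ≤ 1/648 since (t-q)^2 ≤ 1/4
    have hq25 : (1/15 : ℝ) ≤ 2/5 - q := by linarith
    have h648 : (1/648 : ℝ) ≤ (25/72) * (2/5 - q)^2 := by nlinarith
    have htq : (t - q)^2 ≤ 1/4 := by nlinarith
    nlinarith [mul_nonneg (by linarith : (0:ℝ) ≤ 1/q + 2/(1-q) - 6) (by linarith : (0:ℝ) ≤ t - 2/5)]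

lemma prod_one_sub_ge {ι : Type*} (s : Finset ι) (f : ι → ℝ)
    (h0 : ∀ i ∈ s, 0 ≤ f i) (h1 : ∀ i ∈ s, f i ≤ 1) :
    1 - ∑ i ∈ s, f i ≤ ∏ i ∈ s, (1 - f i) := by
  induction s using Finset.cons_induction with
  | empty => simp
  | cons a s ha ih =>
    rw [Finset.prod_cons, Finset.sum_cons]
    have hs0 : 0 ≤ ∑ i ∈ s, f i :=
      Finset.sum_nonneg (fun i hi => h0 i (Finset.mem_cons_of_mem hi))
    have hih := ih (fun i hi => h0 i (Finset.mem_cons_of_mem hi))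
      (fun i hi => h1 i (Finset.mem_cons_of_mem hi))
    have hfa0 : 0 ≤ f a := h0 a (Finset.mem_cons_self a s)
    have hfa1 : f a ≤ 1 := h1 a (Finset.mem_cons_self a s)
    nlinarith [mul_le_mul_of_nonneg_left hih (by linarith : (0:ℝ) ≤ 1 - f a)]

lemma amgm_prod_le {ι : Type*} (s : Finset ι) (f : ι → ℝ)
    (hpos : ∀ i ∈ s, 0 < f i) {c : ℝ} (hc : 0 < c)
    (hsum : ∑ i ∈ s, f i = s.card * c) : ∏ i ∈ s, f i ≤ c ^ s.card := by
  have h1 : ∀ i ∈ s, Real.log (f i) ≤ Real.log c + (f i - c)/c := by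
    intro i hi
    have h2 := Real.log_le_sub_one_of_pos (div_pos (hpos i hi) hc)
    rw [Real.log_div (hpos i hi).ne' hc.ne'] at h2
    have e : (f i - c)/c = f i / c - 1 := by field_simp
    linarith [e]
  have h3 : ∏ i ∈ s, f i = Real.exp (∑ i ∈ s, Real.log (f i)) := by
    rw [Real.exp_sum]
    exact Finset.prod_congr rfl (fun i hi => (Real.exp_log (hpos i hi)).symm)
  rw [h3]
  have h4 : ∑ i ∈ s, Real.log (f i) ≤ s.card * Real.log c := by
    calc ∑ i ∈ s, Real.log (f i) ≤ ∑ i ∈ s, (Real.log c + (f i - c)/c) :=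
          Finset.sum_le_sum h1
      _ = s.card * Real.log c + ((∑ i ∈ s, f i) - s.card * c)/c := by
          rw [Finset.sum_add_distrib, Finset.sum_const, nsmul_eq_mul, ← Finset.sum_div,
            Finset.sum_sub_distrib, Finset.sum_const, nsmul_eq_mul]
      _ = s.card * Real.log c := by rw [hsum]; simp
  calc Real.exp (∑ i ∈ s, Real.log (f i)) ≤ Real.exp (s.card * Real.log c) :=
        Real.exp_le_exp.2 h4
    _ = c ^ s.card := by rw [Real.exp_nat_mul, Real.exp_log hc]

lemma aux5 : ∀ m : ℕ, 5*(m+4)^2 ≤ 2^(m+4)*(m+5) := by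
  intro m
  induction m with
  | zero => norm_num
  | succ k ih =>
    have h1 : 2^(k+1+4)*(k+1+5) = 2*(2^(k+4)*(k+5)) + 2*2^(k+4) := by ring
    have h3 : 16 ≤ 2^(k+4) := by
      calc (16:ℕ) = 2^4 := by norm_num
        _ ≤ 2^(k+4) := Nat.pow_le_pow_right (by norm_num) (by omega)
    nlinarith [h1, h3, ih]

lemma num4 (n : ℕ) (hn : 4 ≤ n) :
    16*((n:ℝ)-1)^(n+1) ≤ (499/500)*2^n*(n:ℝ)^n := by
  rcases eq_or_lt_of_le hn with h4 | h5
  · subst h4; norm_num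
  · have hn5 : 5 ≤ n := h5
    set N : ℝ := (n:ℝ) with hN
    have hN5 : (5:ℝ) ≤ N := by rw [hN]; exact_mod_cast hn5
    have hN0 : (0:ℝ) < N := by linarith
    have hN1 : (0:ℝ) < N - 1 := by linarith
    have hcast : ((n-1 : ℕ):ℝ) = N - 1 := by
      rw [hN, Nat.cast_sub (by omega : 1 ≤ n)]; norm_num
    have hpow : 2*(N-1)^(n-1) ≤ N^(n-1) := by
      have hx : (-2:ℝ) ≤ 1/(N-1) := le_trans (by norm_num) (by positivity : (0:ℝ) ≤ 1/(N-1))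
      have h1 : (1:ℝ) + ((n-1 : ℕ):ℝ) * (1/(N-1)) ≤ (1 + 1/(N-1))^(n-1) :=
        one_add_mul_le_pow hx (n-1)
      rw [hcast] at h1
      have h2 : (1:ℝ) + (N-1) * (1/(N-1)) = 2 := by rw [mul_one_div, div_self hN1.ne']; norm_num
      have h3 : (1:ℝ) + 1/(N-1) = N/(N-1) := by field_simp; ring
      rw [h2, h3, div_pow] at h1
      rw [le_div_iff₀ (pow_pos hN1 _)] at h1
      linarith
    have hind : 5*((n-1:ℕ))^2 ≤ 2^((n-1:ℕ))*n := by
      have := aux5 (n-5)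
      have e1 : n-5+4 = n-1 := by omega
      have e2 : n-5+5 = n := by omega
      rwa [e1, e2] at this
    have hindR : 5*(N-1)^2 ≤ 2^(n-1)*N := by
      have h := (Nat.cast_le (α := ℝ)).2 hind
      push_cast at h
      rw [hcast] at h
      convert h using 2 <;> push_cast <;> ring
    have h2n : (2:ℝ)^n = 2^(n-1)*2 := by rw [← pow_succ]; congr 1; omega
    have hNn : N^n = N^(n-1)*N := by rw [← pow_succ]; congr 1; omega
    have hp1 : (0:ℝ) ≤ (N-1)^(n-1) := by positivity
    have hp2 : (0:ℝ) < (2:ℝ)^(n-1) := by positivity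
    calc (16:ℝ)*(N-1)^(n+1) = 16*((N-1)^2*(N-1)^(n-1)) := by
          rw [← pow_add]; congr 2; omega
      _ ≤ 16*(((2^(n-1)*N)/5)*(N-1)^(n-1)) := by
          have h5' : (N-1)^2 ≤ (2^(n-1)*N)/5 := by
            rw [le_div_iff₀ (by norm_num)]; linarith
          nlinarith [mul_le_mul_of_nonneg_right h5' hp1]
      _ = (16/5)*(2^(n-1)*((N-1)^(n-1)*N)) := by ring
      _ ≤ (16/5)*(2^(n-1)*((N^(n-1)/2)*N)) := by
          have h6 : (N-1)^(n-1) ≤ N^(n-1)/2 := by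
            rw [le_div_iff₀ (by norm_num)]; linarith
          have h7 := mul_le_mul_of_nonneg_right h6 hN0.le
          have h8 := mul_le_mul_of_nonneg_left h7 hp2.le
          nlinarith [h8]
      _ = (4/5)*(2^n*N^n) := by rw [h2n, hNn]; ring
      _ ≤ (499/500)*2^n*N^n := by
          have : (0:ℝ) ≤ 2^n*N^n := by positivity
          nlinarith

lemma caseII3 (l : Fin 3 → ℝ) (hp : ∀ i, 0 < l i) (hl1 : ∀ i, l i < 1)
    (hs : ∑ i, l i = 1) (j : Fin 3) (hj : 1/2 < l j) :
    ∏ i, l i ≤ (499/500) * ((3:ℝ)/((3:ℝ)-1)^2)^(3:ℕ) * (∏ i, (1 - l i))^2 := by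
  classical
  set E := Finset.univ.erase j with hE
  have hEcard : E.card = 2 := by
    rw [hE, Finset.card_erase_of_mem (Finset.mem_univ j), Finset.card_univ, Fintype.card_fin]
  obtain ⟨a, b, hab, hE2⟩ := Finset.card_eq_two.1 hEcard
  have hsum_split : l j + ∑ i ∈ E, l i = 1 := by
    rw [hE, Finset.add_sum_erase _ _ (Finset.mem_univ j), hs]
  have hsum2 : l a + l b = ∑ i ∈ E, l i := by rw [hE2, Finset.sum_pair hab]
  set σ : ℝ := 1 - l j with hσdef
  have hσsum : l a + l b = σ := by rw [hsum2]; linarith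
  have hσ0 : 0 < σ := by
    have ha' := hp a
    have hb' := hp b
    linarith
  have hσh : σ < 1/2 := by rw [hσdef]; linarith
  have hprodl : ∏ i, l i = l j * (l a * l b) := by
    rw [← Finset.mul_prod_erase _ _ (Finset.mem_univ j), ← hE, hE2, Finset.prod_pair hab]
  have hprodD : ∏ i, (1 - l i) = σ * ((1 - l a) * (1 - l b)) := by
    rw [← Finset.mul_prod_erase _ _ (Finset.mem_univ j), ← hE, hE2, Finset.prod_pair hab, hσdef]
  have hab0 : (0:ℝ) ≤ l a * l b := mul_nonneg (hp a).le (hp b).le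
  set u : ℝ := Real.sqrt (l a * l b) with hu
  have hu2 : u^2 = l a * l b := Real.sq_sqrt hab0
  have hu0 : 0 ≤ u := Real.sqrt_nonneg _
  have huσ : u ≤ σ/2 := by
    have h1 : l a * l b ≤ (σ/2)^2 := by nlinarith [sq_nonneg (l a - l b)]
    have h2 := Real.sqrt_le_sqrt h1
    rw [Real.sqrt_sq (by linarith : (0:ℝ) ≤ σ/2)] at h2; exact h2
  have hfact : (1 - l a)*(1 - l b) = 1 - σ + u^2 := by
    rw [hu2]; linear_combination (-1 : ℝ) * hσsum
  have hkey1 : 2*u*(1-σ/2)^2 ≤ σ*((1-l a)*(1-l b)) := by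
    rw [hfact]
    nlinarith [mul_nonneg (by linarith : (0:ℝ) ≤ σ - 2*u)
      (by nlinarith : (0:ℝ) ≤ 1 - σ - σ*u/2)]
  have hkey2 : 4*(l a*l b)*(1-σ/2)^4 ≤ (σ*((1-l a)*(1-l b)))^2 := by
    have h1 : (2*u*(1-σ/2)^2)^2 ≤ (σ*((1-l a)*(1-l b)))^2 := by
      apply pow_le_pow_left₀ (by positivity) hkey1
    calc 4*(l a*l b)*(1-σ/2)^4 = (2*u*(1-σ/2)^2)^2 := by rw [← hu2]; ring
      _ ≤ _ := h1
  have hpoly : (1-σ) ≤ (499/500)*(27/64)*4*(1-σ/2)^4 := by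
    nlinarith [sq_nonneg (σ - 1/2), sq_nonneg σ, sq_nonneg (σ*(σ-1/2)), sq_nonneg (σ^2)]
  have hx3 : ((3:ℝ)/((3:ℝ)-1)^2)^(3:ℕ) = 27/64 := by norm_num
  rw [hprodl, hprodD, hx3]
  have hlj : l j = 1 - σ := by rw [hσdef]; ring
  rw [hlj]
  calc (1-σ) * (l a * l b) ≤ ((499/500)*(27/64)*4*(1-σ/2)^4) * (l a * l b) :=
        mul_le_mul_of_nonneg_right hpoly hab0
    _ = (499/500)*(27/64)*(4*(l a*l b)*(1-σ/2)^4) := by ring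
    _ ≤ (499/500)*(27/64)*((σ*((1-l a)*(1-l b)))^2) :=
        mul_le_mul_of_nonneg_left hkey2 (by norm_num)
    _ = 499/500 * (27/64) * (σ * ((1 - l a) * (1 - l b)))^2 := by ring

lemma caseII4 {n : ℕ} (hn : 4 ≤ n) (l : Fin n → ℝ) (hp : ∀ i, 0 < l i)
    (hl1 : ∀ i, l i < 1) (hs : ∑ i, l i = 1) (j : Fin n) (hj : 1/2 < l j) :
    ∏ i, l i ≤ (499/500) * ((n:ℝ)/((n:ℝ)-1)^2)^n * (∏ i, (1 - l i))^2 := by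
  classical
  have hN4 : (4:ℝ) ≤ (n:ℝ) := by exact_mod_cast hn
  have hN0 : (0:ℝ) < (n:ℝ) := by linarith
  have hN1 : (0:ℝ) < (n:ℝ) - 1 := by linarith
  set N : ℝ := (n:ℝ) with hN
  set E := Finset.univ.erase j with hE
  have hEcard : E.card = n - 1 := by
    rw [hE, Finset.card_erase_of_mem (Finset.mem_univ j), Finset.card_univ, Fintype.card_fin]
  have hsum_split : l j + ∑ i ∈ E, l i = 1 := by
    rw [hE, Finset.add_sum_erase _ _ (Finset.mem_univ j), hs]
  set σ : ℝ := 1 - l j with hσdef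
  have hσE : ∑ i ∈ E, l i = σ := by rw [hσdef]; linarith
  have hσ0 : 0 < σ := by
    have hne : E.Nonempty := Finset.card_pos.1 (by omega)
    have := Finset.sum_pos (fun i _ => hp i) hne
    rw [hσE] at this; exact this
  have hσh : σ < 1/2 := by rw [hσdef]; linarith
  have hcast : ((n-1:ℕ):ℝ) = N - 1 := by
    rw [hN, Nat.cast_sub (by omega : 1 ≤ n)]; norm_num
  have hAM : ∏ i ∈ E, l i ≤ (σ/(N-1))^(n-1) := by
    have h := amgm_prod_le E l (fun i _ => hp i) (c := σ/(N-1)) (by positivity)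
      (by rw [hEcard, hσE, hcast]; field_simp)
    rwa [hEcard] at h
  have hW : 1 - σ ≤ ∏ i ∈ E, (1 - l i) := by
    have := prod_one_sub_ge E l (fun i _ => (hp i).le) (fun i _ => (hl1 i).le)
    rwa [hσE] at this
  have hprodl : ∏ i, l i ≤ (1-σ)*(σ/(N-1))^(n-1) := by
    rw [← Finset.mul_prod_erase _ _ (Finset.mem_univ j), ← hE]
    have hlj : l j = 1 - σ := by rw [hσdef]; ring
    rw [hlj]
    exact mul_le_mul_of_nonneg_left hAM (by linarith)
  have hDσ : σ * (1 - σ) ≤ ∏ i, (1 - l i) := by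
    rw [← Finset.mul_prod_erase _ _ (Finset.mem_univ j), ← hE]
    have h1j : 1 - l j = σ := by rw [hσdef]
    rw [h1j]
    exact mul_le_mul_of_nonneg_left hW hσ0.le
  have hD2 : (σ*(1-σ))^2 ≤ (∏ i, (1 - l i))^2 := by
    apply pow_le_pow_left₀ (by nlinarith) hDσ
  -- numeric core
  have hkey2 : σ^(n-3)*(N-1)^(n+1) ≤ (499/500)*N^n*(1-σ) := by
    have hA : σ^(n-3) ≤ (1/2)^(n-3) := pow_le_pow_left₀ hσ0.le hσh.le _
    have hnum := num4 n hn
    have h2n3 : (2:ℝ)^(n-3)*8 = 2^n := by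
      rw [show (8:ℝ) = 2^3 from by norm_num, ← pow_add]
      congr 1; omega
    have hhp : (0:ℝ) < (2:ℝ)^(n-3) := by positivity
    calc σ^(n-3)*(N-1)^(n+1) ≤ (1/2)^(n-3)*(N-1)^(n+1) :=
          mul_le_mul_of_nonneg_right hA (by positivity)
      _ ≤ (1/2)^(n-3)*((499/500)*2^n*N^n/16) := by
          apply mul_le_mul_of_nonneg_left _ (by positivity)
          rw [le_div_iff₀ (by norm_num)]
          calc (N-1)^(n+1)*16 = 16*(N-1)^(n+1) := by ring
            _ ≤ (499/500)*2^n*N^n := by rw [hN]; exact hnum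
      _ = (499/500)*N^n*(2^n*(1/2)^(n-3))/16 := by ring
      _ = (499/500)*N^n*(1/2) := by
          rw [div_pow, one_pow, ← h2n3]
          field_simp
          ring
      _ ≤ (499/500)*N^n*(1-σ) := by
          apply mul_le_mul_of_nonneg_left (by linarith) (by positivity)
  have hkey : (1-σ)*(σ/(N-1))^(n-1) ≤ (499/500)*(N/(N-1)^2)^n*(σ*(1-σ))^2 := by
    have he1 : (σ/(N-1))^(n-1) = σ^(n-1)/(N-1)^(n-1) := div_pow _ _ _
    have he2 : (N/(N-1)^2)^n = N^n/(N-1)^(2*n) := by rw [div_pow, ← pow_mul, mul_comm 2 n]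
    rw [he1, he2,
      show (1-σ)*(σ^(n-1)/(N-1)^(n-1)) = ((1-σ)*σ^(n-1))/(N-1)^(n-1) from by ring,
      show (499/500)*(N^n/(N-1)^(2*n))*(σ*(1-σ))^2
        = ((499/500)*N^n*(σ*(1-σ))^2)/(N-1)^(2*n) from by ring,
      div_le_div_iff₀ (pow_pos hN1 _) (pow_pos hN1 _)]
    have hsplit1 : σ^(n-1) = σ^(n-3)*σ^2 := by rw [← pow_add]; congr 1; omega
    have hsplit2 : (N-1)^(2*n) = (N-1)^(n+1)*(N-1)^(n-1) := by rw [← pow_add]; congr 1; omega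
    rw [hsplit1, hsplit2]
    have hmul := mul_le_mul_of_nonneg_right hkey2
      (show (0:ℝ) ≤ σ^2*(1-σ)*(N-1)^(n-1) from
        mul_nonneg (mul_nonneg (sq_nonneg σ) (by linarith)) (by positivity))
    calc (1-σ)*(σ^(n-3)*σ^2)*((N-1)^(n+1)*(N-1)^(n-1))
        = (σ^(n-3)*(N-1)^(n+1))*(σ^2*(1-σ)*(N-1)^(n-1)) := by ring
      _ ≤ ((499/500)*N^n*(1-σ))*(σ^2*(1-σ)*(N-1)^(n-1)) := hmul
      _ = (499/500)*N^n*(σ*(1-σ))^2*(N-1)^(n-1) := by ring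
  calc ∏ i, l i ≤ (1-σ)*(σ/(N-1))^(n-1) := hprodl
    _ ≤ (499/500)*(N/(N-1)^2)^n*(σ*(1-σ))^2 := hkey
    _ ≤ (499/500)*(N/(N-1)^2)^n*(∏ i, (1 - l i))^2 := by
        apply mul_le_mul_of_nonneg_left hD2 (by positivity)
    _ = (499/500) * (N/(N-1)^2)^n * (∏ i, (1 - l i))^2 := by ring

lemma exp_neg_le {x : ℝ} (h0 : 0 ≤ x) (h1 : x ≤ 1) : Real.exp (-x) ≤ 1 - x/2 := by
  have h2 := Real.add_one_le_exp x
  have h3 : Real.exp (-x) * Real.exp x = 1 := by rw [← Real.exp_add]; simp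
  have h4 := Real.exp_pos x
  have h5 := (Real.exp_pos (-x)).le
  nlinarith [mul_le_mul_of_nonneg_left h2 h5]

set_option maxHeartbeats 1000000 in
lemma scalar_main {n : ℕ} (hn : 3 ≤ n) (l : Fin n → ℝ) (hp : ∀ i, 0 < l i)
    (hl1 : ∀ i, l i < 1) (hs : ∑ i, l i = 1) :
    ∏ i, l i ≤ ((n:ℝ)/((n:ℝ)-1)^2)^n
      * (1 - (1/500) * ∑ i, (l i - 1/(n:ℝ))^2) * (∏ i, (1 - l i))^2 := by
  have hN3 : (3:ℝ) ≤ (n:ℝ) := by exact_mod_cast hn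
  set N : ℝ := (n:ℝ) with hNdef
  have hN0 : 0 < N := by linarith
  set q : ℝ := 1/N with hqdef
  have hq0 : 0 < q := by positivity
  have hq3 : q ≤ 1/3 := by
    rw [hqdef, div_le_div_iff₀ hN0 (by norm_num)]; linarith
  have h1q : 0 < 1 - q := by linarith
  have hN1 : N - 1 ≠ 0 := by intro h; nlinarith
  have hnq : N * q = 1 := by rw [hqdef]; field_simp
  set S : ℝ := ∑ i, (l i - q)^2 with hSdef
  have hS0 : 0 ≤ S := Finset.sum_nonneg (fun i _ => sq_nonneg _)
  have hSexp : S = (∑ i, (l i)^2) - 1/N := by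
    have h1 : ∀ i : Fin n, (l i - q)^2 = (l i)^2 - (2*q)*(l i) + q^2 := fun i => by ring
    rw [hSdef, Finset.sum_congr rfl (fun i _ => h1 i), Finset.sum_add_distrib,
      Finset.sum_sub_distrib, ← Finset.mul_sum, hs, Finset.sum_const, Finset.card_univ,
      Fintype.card_fin, nsmul_eq_mul]
    rw [hqdef]
    field_simp
    rw [← hNdef]
    ring
  have hsq : ∑ i, (l i)^2 ≤ 1 := by
    rw [← hs]
    exact Finset.sum_le_sum (fun i _ => by nlinarith [hp i, hl1 i])
  have hS1 : S ≤ 1 := by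
    have h0N : 0 < 1/N := by positivity
    rw [hSexp]; linarith
  have hD0 : (0:ℝ) < ∏ i, (1 - l i) := Finset.prod_pos (fun i _ => by linarith [hl1 i])
  have hx0 : (0:ℝ) < N/(N-1)^2 := by
    apply div_pos hN0; nlinarith
  by_cases hhalf : ∀ i, l i ≤ 1/2
  · -- Case I
    set Gq : ℝ := Real.log q - 2*Real.log (1-q) with hGq
    set B : ℝ := 1/q + 2/(1-q) with hB
    have hcore : ∀ i : Fin n, (1/162)*(l i - q)^2 ≤
        Gq - (Real.log (l i) - 2*Real.log (1 - l i)) + B*(l i - q) :=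
      fun i => core hq0 hq3 (hp i) (hhalf i)
    have hsum1 : (1/162)*S ≤ ∑ i, (Gq - (Real.log (l i) - 2*Real.log (1 - l i)) + B*(l i - q)) := by
      rw [hSdef, Finset.mul_sum]
      exact Finset.sum_le_sum (fun i _ => hcore i)
    have hsum2 : ∑ i, (Gq - (Real.log (l i) - 2*Real.log (1 - l i)) + B*(l i - q))
        = N * Gq - ((∑ i, Real.log (l i)) - 2*∑ i, Real.log (1 - l i)) := by
      have e : ∀ i : Fin n, Gq - (Real.log (l i) - 2*Real.log (1 - l i)) + B*(l i - q)
          = ((Gq - B*q) + B*(l i) + 2*(Real.log (1 - l i))) - Real.log (l i) := fun i => by ring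
      rw [Finset.sum_congr rfl (fun i _ => e i), Finset.sum_sub_distrib,
        Finset.sum_add_distrib, Finset.sum_add_distrib, ← Finset.mul_sum, ← Finset.mul_sum,
        hs, Finset.sum_const, Finset.card_univ, Fintype.card_fin, nsmul_eq_mul, mul_one]
      rw [← hNdef]
      linear_combination (- B) * hnq
    have key : (∑ i, Real.log (l i)) - 2*(∑ i, Real.log (1 - l i))
        ≤ N * Gq - (1/162)*S := by rw [hsum2] at hsum1; linarith
    -- exponentiate
    have hPl : ∏ i, l i = Real.exp (∑ i, Real.log (l i)) := by
      rw [Real.exp_sum]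
      exact Finset.prod_congr rfl (fun i _ => (Real.exp_log (hp i)).symm)
    have hDl : ∏ i, (1 - l i) = Real.exp (∑ i, Real.log (1 - l i)) := by
      rw [Real.exp_sum]
      exact Finset.prod_congr rfl (fun i _ => (Real.exp_log (by linarith [hl1 i])).symm)
    have hfact : ∏ i, l i = Real.exp ((∑ i, Real.log (l i)) - 2*(∑ i, Real.log (1 - l i)))
        * (∏ i, (1 - l i))^2 := by
      rw [hPl, hDl, sq, ← Real.exp_add, ← Real.exp_add]
      congr 1
      ring
    have hexpGq : Real.exp Gq = N/(N-1)^2 := by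
      rw [hGq]
      have h2 : (2:ℝ)*Real.log (1-q) = Real.log ((1-q)^2) := by
        rw [Real.log_pow]; norm_num
      rw [h2, Real.exp_sub, Real.exp_log hq0, Real.exp_log (by positivity : (0:ℝ) < (1-q)^2)]
      have h1mq : 1 - q = (N-1)/N := by rw [hqdef]; field_simp
      rw [h1mq, hqdef]
      rw [div_pow, div_div_div_eq, one_mul, div_eq_div_iff (by positivity) (by nlinarith)]
      ring
    have hmono := Real.exp_le_exp.2 key
    have hsplit : Real.exp (N * Gq - (1/162)*S)
        = (N/(N-1)^2)^n * Real.exp (-((1/162)*S)) := by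
      rw [← hexpGq, ← Real.exp_nat_mul, ← Real.exp_add, hNdef, sub_eq_add_neg]
    have hexpS : Real.exp (-((1/162)*S)) ≤ 1 - (1/500)*S := by
      have h1 : (1/162)*S ≤ 1 := by linarith
      have h2 : 0 ≤ (1/162)*S := by linarith
      have := exp_neg_le h2 h1
      linarith
    calc ∏ i, l i
        = Real.exp ((∑ i, Real.log (l i)) - 2*(∑ i, Real.log (1 - l i)))
            * (∏ i, (1 - l i))^2 := hfact
      _ ≤ Real.exp (N * Gq - (1/162)*S) * (∏ i, (1 - l i))^2 := by
          exact mul_le_mul_of_nonneg_right hmono (sq_nonneg _)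
      _ = ((N/(N-1)^2)^n * Real.exp (-((1/162)*S))) * (∏ i, (1 - l i))^2 := by rw [hsplit]
      _ ≤ ((N/(N-1)^2)^n * (1 - (1/500)*S)) * (∏ i, (1 - l i))^2 := by
          apply mul_le_mul_of_nonneg_right _ (sq_nonneg _)
          exact mul_le_mul_of_nonneg_left hexpS (by positivity)
  · push_neg at hhalf
    obtain ⟨j, hj⟩ := hhalf
    have hc2 : ∏ i, l i ≤ (499/500) * (N/(N-1)^2)^n * (∏ i, (1 - l i))^2 := by
      rcases (by omega : n = 3 ∨ 4 ≤ n) with h3 | h4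
      · subst h3
        simpa [hNdef] using caseII3 l hp hl1 hs j hj
      · exact caseII4 h4 l hp hl1 hs j hj
    have h1 : (0:ℝ) ≤ (N/(N-1)^2)^n * (∏ i, (1 - l i))^2 := by positivity
    have h2 : (0:ℝ) ≤ ((N/(N-1)^2)^n * (∏ i, (1 - l i))^2) * (1 - S) :=
      mul_nonneg h1 (by linarith)
    have h3 : (499/500) * (N/(N-1)^2)^n * (∏ i, (1 - l i))^2
        ≤ (N/(N-1)^2)^n * (1 - (1/500)*S) * (∏ i, (1 - l i))^2 := by nlinarith [h2]
    exact hc2.trans h3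

lemma S_le_one {n : ℕ} (hn : 3 ≤ n) (l : Fin n → ℝ) (hp : ∀ i, 0 < l i)
    (hl1 : ∀ i, l i < 1) (hs : ∑ i, l i = 1) :
    ∑ i, (l i - 1/(n:ℝ))^2 ≤ 1 := by
  have hN3 : (3:ℝ) ≤ (n:ℝ) := by exact_mod_cast hn
  have hN0 : (0:ℝ) < (n:ℝ) := by linarith
  have hSexp : ∑ i, (l i - 1/(n:ℝ))^2 = (∑ i, (l i)^2) - 1/(n:ℝ) := by
    have h1 : ∀ i : Fin n, (l i - 1/(n:ℝ))^2
        = (l i)^2 - (2*(1/(n:ℝ)))*(l i) + (1/(n:ℝ))^2 := fun i => by ring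
    rw [Finset.sum_congr rfl (fun i _ => h1 i), Finset.sum_add_distrib,
      Finset.sum_sub_distrib, ← Finset.mul_sum, hs, Finset.sum_const, Finset.card_univ,
      Fintype.card_fin, nsmul_eq_mul]
    field_simp
    ring
  have hsq : ∑ i, (l i)^2 ≤ 1 := by
    rw [← hs]
    exact Finset.sum_le_sum (fun i _ => by nlinarith [hp i, hl1 i])
  have h0N : 0 < 1/(n:ℝ) := by positivity
  rw [hSexp]; linarith

end BCGAux

/-- Lemma (linear algebra, BCG Appendix B5): for a symmetric positive definite `n × n`
real matrix `H` with trace `1` (`n ≥ 3`), there is a constant `A = A(n) > 0` with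
`det H ^ (1/2) / det (I - H) ≤ (n / (n-1)^2)^(n/2) * (1 - A * ∑ (λᵢ - 1/n)²)`,
where `λ₁, …, λₙ` are the eigenvalues of `H`. -/
theorem stmt_0 (n : ℕ) (hn : 3 ≤ n) :
    ∃ A : ℝ, 0 < A ∧
      ∀ (H : Matrix (Fin n) (Fin n) ℝ) (hpd : H.PosDef), H.trace = 1 →
        Real.sqrt H.det / (1 - H).det ≤
          ((n : ℝ) / ((n : ℝ) - 1) ^ 2) ^ ((n : ℝ) / 2) *
            (1 - A * ∑ i, (hpd.1.eigenvalues i - 1 / (n : ℝ)) ^ 2) := by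
  refine ⟨1/1000, by norm_num, ?_⟩
  intro H hpd htr
  classical
  set l : Fin n → ℝ := hpd.1.eigenvalues with hl
  have hof : (RCLike.ofReal ∘ l : Fin n → ℝ) = l := funext fun i => rfl
  have hUs : (hpd.1.eigenvectorUnitary : Matrix (Fin n) (Fin n) ℝ)
      * (star (hpd.1.eigenvectorUnitary : Matrix (Fin n) (Fin n) ℝ)) = 1 :=
    Unitary.coe_mul_star_self _
  have hsU : (star (hpd.1.eigenvectorUnitary : Matrix (Fin n) (Fin n) ℝ))
      * (hpd.1.eigenvectorUnitary : Matrix (Fin n) (Fin n) ℝ) = 1 :=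
    Unitary.coe_star_mul_self _
  have hsum : ∑ i, l i = 1 := by
    have h1 : H.trace = (Matrix.diagonal (RCLike.ofReal ∘ l) : Matrix (Fin n) (Fin n) ℝ).trace := by
      conv_lhs => rw [hpd.1.spectral_theorem, Unitary.conjStarAlgAut_apply]
      rw [Matrix.trace_mul_cycle, hsU, Matrix.one_mul]
    rw [htr, hof] at h1
    rw [Matrix.trace_diagonal] at h1
    exact h1.symm
  have hdet : H.det = ∏ i, l i := by
    simpa using hpd.1.det_eq_prod_eigenvalues
  have hdet1 : (1 - H).det = ∏ i, (1 - l i) := by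
    have h1 : (hpd.1.eigenvectorUnitary : Matrix (Fin n) (Fin n) ℝ)
        * (1 - Matrix.diagonal (RCLike.ofReal ∘ l))
        * (star (hpd.1.eigenvectorUnitary : Matrix (Fin n) (Fin n) ℝ)) = 1 - H := by
      rw [Matrix.mul_sub, Matrix.mul_one, Matrix.sub_mul, hUs]
      conv_rhs => rw [hpd.1.spectral_theorem, Unitary.conjStarAlgAut_apply]
    rw [← h1, Matrix.det_mul, Matrix.det_mul]
    have h2 : (hpd.1.eigenvectorUnitary : Matrix (Fin n) (Fin n) ℝ).det
        * (star (hpd.1.eigenvectorUnitary : Matrix (Fin n) (Fin n) ℝ)).det = 1 := by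
      rw [← Matrix.det_mul, hUs, Matrix.det_one]
    have h3 : (1 - Matrix.diagonal (RCLike.ofReal ∘ l) : Matrix (Fin n) (Fin n) ℝ).det
        = ∏ i, (1 - l i) := by
      rw [hof, ← Matrix.diagonal_one, Matrix.diagonal_sub, Matrix.det_diagonal]
    calc (hpd.1.eigenvectorUnitary : Matrix (Fin n) (Fin n) ℝ).det
          * (1 - Matrix.diagonal (RCLike.ofReal ∘ l) : Matrix (Fin n) (Fin n) ℝ).det
          * (star (hpd.1.eigenvectorUnitary : Matrix (Fin n) (Fin n) ℝ)).det
        = (1 - Matrix.diagonal (RCLike.ofReal ∘ l) : Matrix (Fin n) (Fin n) ℝ).det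
          * ((hpd.1.eigenvectorUnitary : Matrix (Fin n) (Fin n) ℝ).det
            * (star (hpd.1.eigenvectorUnitary : Matrix (Fin n) (Fin n) ℝ)).det) := by ring
      _ = ∏ i, (1 - l i) := by rw [h2, h3, mul_one]
  have hp : ∀ i, 0 < l i := fun i => hpd.eigenvalues_pos i
  have hl1 : ∀ i, l i < 1 := by
    intro i
    have h2 : l i + ∑ k ∈ Finset.univ.erase i, l k = 1 := by
      rw [Finset.add_sum_erase _ _ (Finset.mem_univ i), hsum]
    have hne : (Finset.univ.erase i).Nonempty := by
      apply Finset.card_pos.1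
      rw [Finset.card_erase_of_mem (Finset.mem_univ i), Finset.card_univ, Fintype.card_fin]
      omega
    have hpos : 0 < ∑ k ∈ Finset.univ.erase i, l k :=
      Finset.sum_pos (fun k _ => hp k) hne
    linarith
  have hS1 := S_le_one hn l hp hl1 hsum
  have hS0 : 0 ≤ ∑ i, (l i - 1/(n:ℝ))^2 := Finset.sum_nonneg (fun i _ => sq_nonneg _)
  set S : ℝ := ∑ i, (l i - 1/(n:ℝ))^2 with hS
  have key := scalar_main hn l hp hl1 hsum
  have hD0 : (0:ℝ) < ∏ i, (1 - l i) := Finset.prod_pos (fun i _ => by linarith [hl1 i])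
  have hN3 : (3:ℝ) ≤ (n:ℝ) := by exact_mod_cast hn
  have hX0 : (0:ℝ) < (n:ℝ)/((n:ℝ)-1)^2 := by
    apply div_pos (by linarith)
    nlinarith
  set X : ℝ := (n:ℝ)/((n:ℝ)-1)^2 with hX
  rw [hdet, hdet1, div_le_iff₀ hD0]
  have h1 : Real.sqrt (∏ i, l i)
      ≤ Real.sqrt (X^n * (1 - (1/500)*S) * (∏ i, (1 - l i))^2) := Real.sqrt_le_sqrt key
  have h2 : Real.sqrt (X^n * (1 - (1/500)*S) * (∏ i, (1 - l i))^2)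
      = Real.sqrt (X^n) * Real.sqrt (1 - (1/500)*S) * (∏ i, (1 - l i)) := by
    rw [Real.sqrt_mul (mul_nonneg (pow_nonneg hX0.le n) (by linarith)),
      Real.sqrt_mul (pow_nonneg hX0.le n), Real.sqrt_sq hD0.le]
  have h3 : Real.sqrt (X^n) = X^((n:ℝ)/2) := by
    rw [show (n:ℝ)/2 = (n:ℝ)*(1/2) by ring, Real.rpow_mul hX0.le, Real.rpow_natCast,
      Real.sqrt_eq_rpow]
  have h4 : Real.sqrt (1 - (1/500)*S) ≤ 1 - (1/1000)*S := by
    have ha : (0:ℝ) ≤ 1 - (1/1000)*S := by linarith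
    have hb : 1 - (1/500)*S ≤ (1 - (1/1000)*S)^2 := by nlinarith [sq_nonneg S]
    calc Real.sqrt (1 - (1/500)*S) ≤ Real.sqrt ((1 - (1/1000)*S)^2) := Real.sqrt_le_sqrt hb
      _ = 1 - (1/1000)*S := Real.sqrt_sq ha
  calc Real.sqrt (∏ i, l i)
      ≤ Real.sqrt (X^n) * Real.sqrt (1 - (1/500)*S) * (∏ i, (1 - l i)) := by
        rw [← h2]; exact h1
    _ ≤ X^((n:ℝ)/2) * (1 - (1/1000)*S) * (∏ i, (1 - l i)) := by
        rw [h3]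
        apply mul_le_mul_of_nonneg_right _ hD0.le
        exact mul_le_mul_of_nonneg_left h4 (Real.rpow_nonneg hX0.le _)
end

section
/- Let L be a positive semidefinite symmetric n×n real matrix with trace(L) ≤ n(1+β) and det(L) ≥ (1-α)² for small α, β > 0. Then there exists a function α₃(α, β) with α₃ → 0 as α, β → 0 such that ‖L - Id‖ ≤ α₃(α, β). In particular, near-equality in the arithmetic-geometric mean inequality for the eigenvalues of L forces L to be close to the identity. -/
private theorem key_ineq' {x M : ℝ} (hx : 0 < x) (hxM : x ≤ M) :
    (x - 1) ^ 2 ≤ (Real.sqrt M + 1) ^ 2 * (x - 1 - Real.log x) := by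
  set s := Real.sqrt x with hs
  have hs0 : 0 < s := Real.sqrt_pos.2 hx
  have hs2 : s ^ 2 = x := Real.sq_sqrt hx.le
  have hlogs : Real.log s ≤ s - 1 := Real.log_le_sub_one_of_pos hs0
  have hlogx : Real.log x = 2 * Real.log s := by
    rw [hs, Real.log_sqrt hx.le]; ring
  have hsM : s ≤ Real.sqrt M := Real.sqrt_le_sqrt hxM
  have hM0 : 0 ≤ Real.sqrt M := Real.sqrt_nonneg M
  have h1 : (s - 1) ^ 2 ≤ x - 1 - Real.log x := by nlinarith
  have h2 : (x - 1) ^ 2 = (s - 1) ^ 2 * (s + 1) ^ 2 := by rw [← hs2]; ring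
  have h3 : (s + 1) ^ 2 ≤ (Real.sqrt M + 1) ^ 2 := by nlinarith
  calc (x - 1) ^ 2 = (s - 1) ^ 2 * (s + 1) ^ 2 := h2
    _ ≤ (x - 1 - Real.log x) * (Real.sqrt M + 1) ^ 2 := by
        apply mul_le_mul h1 h3 (by positivity) (by nlinarith)
    _ = (Real.sqrt M + 1) ^ 2 * (x - 1 - Real.log x) := by ring

open Matrix in
private theorem trace_eq_sum_eig' (n : ℕ) (L : Matrix (Fin n) (Fin n) ℝ)
    (hH : L.IsHermitian) : L.trace = ∑ i, hH.eigenvalues i := by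
  conv_lhs => rw [hH.spectral_theorem, Unitary.conjStarAlgAut_apply]
  rw [Matrix.trace_mul_cycle, Unitary.star_mul_self_of_mem (hH.eigenvectorUnitary).2]
  simp [Matrix.trace_diagonal]

open Matrix in
private theorem frob_eq' (n : ℕ) (L : Matrix (Fin n) (Fin n) ℝ) (hH : L.IsHermitian) :
    ∑ i, ∑ j, (L i j - (1 : Matrix (Fin n) (Fin n) ℝ) i j) ^ 2
      = ∑ i, (hH.eigenvalues i - 1) ^ 2 := by
  set M := L - 1 with hM
  have hsym : ∀ i j, M j i = M i j := by
    intro i j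
    have hLs : Lᵀ = L := by simpa [Matrix.IsHermitian, Matrix.conjTranspose_eq_transpose_of_trivial] using hH
    have h2 := congrFun (congrFun hLs j) i
    simp only [Matrix.transpose_apply] at h2
    simp [hM, h2, Matrix.one_apply, eq_comm]
  have h1 : ∑ i, ∑ j, (L i j - (1 : Matrix (Fin n) (Fin n) ℝ) i j) ^ 2
      = (M * M).trace := by
    rw [Matrix.trace]
    congr 1
    ext i
    simp only [Matrix.diag, Matrix.mul_apply]
    refine Finset.sum_congr rfl fun j _ => ?_
    rw [hsym i j]
    simp [hM, Matrix.sub_apply, sq]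
  rw [h1]
  set U : Matrix (Fin n) (Fin n) ℝ := (hH.eigenvectorUnitary : Matrix (Fin n) (Fin n) ℝ) with hU
  have hUU : star U * U = 1 := Unitary.star_mul_self_of_mem (hH.eigenvectorUnitary).2
  have hUU' : U * star U = 1 := Unitary.mul_star_self_of_mem (hH.eigenvectorUnitary).2
  have hMdec : M = U * Matrix.diagonal (fun i => hH.eigenvalues i - 1) * star U := by
    have h1' : (1 : Matrix (Fin n) (Fin n) ℝ) = U * Matrix.diagonal (fun _ => (1:ℝ)) * star U := by
      rw [Matrix.diagonal_one, mul_one, hUU']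
    have hs := hH.spectral_theorem
    rw [Unitary.conjStarAlgAut_apply] at hs
    rw [hM]
    nth_rw 1 [hs, h1']
    rw [← Matrix.sub_mul, ← Matrix.mul_sub, ← Matrix.diagonal_sub]
    congr 1
  rw [hMdec]
  have hsq : (U * Matrix.diagonal (fun i => hH.eigenvalues i - 1) * star U) *
      (U * Matrix.diagonal (fun i => hH.eigenvalues i - 1) * star U)
      = U * Matrix.diagonal (fun i => (hH.eigenvalues i - 1)^2) * star U := by
    simp only [pow_two, Matrix.mul_assoc]
    rw [← Matrix.mul_assoc (star U) U, hUU, Matrix.one_mul,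
      ← Matrix.mul_assoc (Matrix.diagonal _) (Matrix.diagonal _), Matrix.diagonal_mul_diagonal]
  rw [hsq, Matrix.trace_mul_cycle, hUU, Matrix.one_mul, Matrix.trace_diagonal]

/-- Near-equality in the arithmetic-geometric mean inequality: a positive semidefinite
symmetric matrix `L` with `trace L ≤ n (1 + β)` and `det L ≥ (1 - α)²` is close to the
identity, quantitatively: `‖L - Id‖ ≤ α₃(α, β)` (Frobenius norm) with `α₃ → 0` as
`α, β → 0`. -/
theorem stmt_1 (n : ℕ) (hn : 1 ≤ n) :
    ∃ α₃ : ℝ → ℝ → ℝ,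
      (∀ ε : ℝ, 0 < ε → ∃ δ : ℝ, 0 < δ ∧
        ∀ α β : ℝ, 0 < α → α ≤ δ → 0 < β → β ≤ δ → α₃ α β ≤ ε) ∧
      ∀ (α β : ℝ) (L : Matrix (Fin n) (Fin n) ℝ), 0 < α → α < 1 → 0 < β →
        L.PosSemidef → L.trace ≤ (n : ℝ) * (1 + β) → (1 - α) ^ 2 ≤ L.det →
        Real.sqrt (∑ i, ∑ j, (L i j - (1 : Matrix (Fin n) (Fin n) ℝ) i j) ^ 2)
          ≤ α₃ α β := by
  refine ⟨fun α β => (Real.sqrt ((n : ℝ) * (1 + β)) + 1) *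
      Real.sqrt ((n : ℝ) * β - 2 * Real.log (1 - α)), ?_, ?_⟩
  · -- convergence to 0
    intro ε hε
    set K : ℝ := Real.sqrt (2 * n) + 1 with hK
    have hK0 : 0 < K := by positivity
    refine ⟨min (1/2) (ε ^ 2 / (K ^ 2 * ((n : ℝ) + 4))), ?_, ?_⟩
    · have : (0:ℝ) < (n : ℝ) + 4 := by positivity
      positivity
    · intro α β hα hαδ hβ hβδ
      set δ := min (1/2) (ε ^ 2 / (K ^ 2 * ((n : ℝ) + 4))) with hδ
      have hδhalf : δ ≤ 1/2 := min_le_left _ _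
      have hα2 : α ≤ 1/2 := hαδ.trans hδhalf
      have hβ2 : β ≤ 1/2 := hβδ.trans hδhalf
      have hfac : Real.sqrt ((n : ℝ) * (1 + β)) + 1 ≤ K := by
        rw [hK]
        have hn1 : (1:ℝ) ≤ (n:ℝ) := Nat.one_le_cast.2 hn
        have : (n : ℝ) * (1 + β) ≤ 2 * n := by nlinarith
        have := Real.sqrt_le_sqrt this
        linarith
      have hlog : - Real.log (1 - α) ≤ 2 * α := by
        have h1α : (0:ℝ) < 1 - α := by linarith
        have := Real.one_sub_inv_le_log_of_pos h1α
        have hinv : (1 - α)⁻¹ ≤ 1 + 2 * α := by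
          rw [inv_le_iff_one_le_mul₀ h1α]
          nlinarith
        linarith
      have hB : (n : ℝ) * β - 2 * Real.log (1 - α) ≤ ((n : ℝ) + 4) * δ := by
        have h1 : (n : ℝ) * β ≤ (n : ℝ) * δ := by
          apply mul_le_mul_of_nonneg_left hβδ (by positivity)
        nlinarith
      have hδ2 : ((n : ℝ) + 4) * δ ≤ ε ^ 2 / K ^ 2 := by
        have h1 : δ ≤ ε ^ 2 / (K ^ 2 * ((n : ℝ) + 4)) := min_le_right _ _
        have hn4 : (0:ℝ) < (n : ℝ) + 4 := by positivity
        rw [div_mul_eq_div_div] at h1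
        calc ((n : ℝ) + 4) * δ ≤ ((n : ℝ) + 4) * (ε ^ 2 / K ^ 2 / ((n : ℝ) + 4)) :=
              mul_le_mul_of_nonneg_left h1 hn4.le
          _ = ε ^ 2 / K ^ 2 := by field_simp
      have hsB : Real.sqrt ((n : ℝ) * β - 2 * Real.log (1 - α)) ≤ ε / K := by
        have h1 : Real.sqrt ((n : ℝ) * β - 2 * Real.log (1 - α))
            ≤ Real.sqrt (ε ^ 2 / K ^ 2) := Real.sqrt_le_sqrt (hB.trans hδ2)
        have h2 : Real.sqrt (ε ^ 2 / K ^ 2) = ε / K := by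
          rw [← div_pow, Real.sqrt_sq (by positivity)]
        linarith [h1, h2.le]
      calc (Real.sqrt ((n : ℝ) * (1 + β)) + 1) *
            Real.sqrt ((n : ℝ) * β - 2 * Real.log (1 - α))
          ≤ K * (ε / K) := by
            apply mul_le_mul hfac hsB (Real.sqrt_nonneg _) hK0.le
        _ = ε := by field_simp
  · -- main bound
    intro α β L hα hα1 hβ hPSD htr hdet
    have hH : L.IsHermitian := hPSD.1
    set lam : Fin n → ℝ := hH.eigenvalues with hlam
    have htr' : L.trace = ∑ i, lam i := trace_eq_sum_eig' n L hH
    have hdet' : L.det = ∏ i, lam i := by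
      have := hH.det_eq_prod_eigenvalues
      simpa using this
    have hl0 : ∀ i, 0 ≤ lam i := hPSD.eigenvalues_nonneg
    have hprod : (1 - α) ^ 2 ≤ ∏ i, lam i := by rw [← hdet']; exact hdet
    have hprodpos : (0:ℝ) < ∏ i, lam i := by
      have : (0:ℝ) < (1 - α) ^ 2 := pow_pos (by linarith) 2
      linarith
    have hpos : ∀ i, 0 < lam i := by
      intro i
      rcases (hl0 i).lt_or_eq with h | h
      · exact h
      · exfalso
        have : (∏ j, lam j) = 0 := Finset.prod_eq_zero (Finset.mem_univ i) h.symm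
        linarith
    have hsum : ∑ i, lam i ≤ (n : ℝ) * (1 + β) := by rw [← htr']; exact htr
    have hMb : ∀ i, lam i ≤ (n : ℝ) * (1 + β) := by
      intro i
      have h1 : lam i ≤ ∑ j, lam j :=
        Finset.single_le_sum (fun j _ => hl0 j) (Finset.mem_univ i)
      linarith
    -- sum of the log-defect
    have hlogprod : ∑ i, Real.log (lam i) = Real.log (∏ i, lam i) :=
      (Real.log_prod fun i _ => (hpos i).ne').symm
    have hlogdet : 2 * Real.log (1 - α) ≤ Real.log (∏ i, lam i) := by
      have h1 : Real.log ((1 - α) ^ 2) ≤ Real.log (∏ i, lam i) :=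
        Real.log_le_log (pow_pos (by linarith) 2) hprod
      rwa [Real.log_pow, Nat.cast_ofNat] at h1
    have hcard : ∑ _i : Fin n, (1:ℝ) = (n : ℝ) := by simp
    have hD : ∑ i, (lam i - 1 - Real.log (lam i)) ≤ (n : ℝ) * β - 2 * Real.log (1 - α) := by
      have : ∑ i, (lam i - 1 - Real.log (lam i))
          = (∑ i, lam i) - (n : ℝ) - Real.log (∏ i, lam i) := by
        rw [← hlogprod, ← hcard]
        rw [Finset.sum_sub_distrib, Finset.sum_sub_distrib]
      rw [this]
      nlinarith
    set C : ℝ := (Real.sqrt ((n : ℝ) * (1 + β)) + 1) ^ 2 with hC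
    have hC0 : 0 ≤ C := by positivity
    have hkey : ∑ i, (lam i - 1) ^ 2 ≤ C * ((n : ℝ) * β - 2 * Real.log (1 - α)) := by
      calc ∑ i, (lam i - 1) ^ 2
          ≤ ∑ i, C * (lam i - 1 - Real.log (lam i)) := by
            apply Finset.sum_le_sum
            intro i _
            exact key_ineq' (hpos i) (hMb i)
        _ = C * ∑ i, (lam i - 1 - Real.log (lam i)) := by rw [Finset.mul_sum]
        _ ≤ C * ((n : ℝ) * β - 2 * Real.log (1 - α)) :=
            mul_le_mul_of_nonneg_left hD hC0
    have hfrob : ∑ i, ∑ j, (L i j - (1 : Matrix (Fin n) (Fin n) ℝ) i j) ^ 2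
        = ∑ i, (lam i - 1) ^ 2 := frob_eq' n L hH
    rw [hfrob]
    calc Real.sqrt (∑ i, (lam i - 1) ^ 2)
        ≤ Real.sqrt (C * ((n : ℝ) * β - 2 * Real.log (1 - α))) := Real.sqrt_le_sqrt hkey
      _ = Real.sqrt C * Real.sqrt ((n : ℝ) * β - 2 * Real.log (1 - α)) :=
          Real.sqrt_mul hC0 _
      _ = (Real.sqrt ((n : ℝ) * (1 + β)) + 1) *
          Real.sqrt ((n : ℝ) * β - 2 * Real.log (1 - α)) := by
          rw [hC, Real.sqrt_sq (by positivity)]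
end

section
/- Let f : Y → X be a C¹ map between n-dimensional Riemannian manifolds, y ∈ Y, and suppose H is a symmetric positive definite endomorphism of T_{f(y)}X with eigenvalues in (0,1), and H' a symmetric positive semidefinite endomorphism of T_yY with trace 1, such that for all u ∈ T_yY and v ∈ T_{f(y)}X, |⟨(I - H)(d_yf(u)), v⟩| ≤ c·⟨H v, v⟩^{1/2}·⟨H' u, u⟩^{1/2}. Then |Jac f(y)| ≤ (c/√n)ⁿ · det(H)^{1/2} / det(I - H). -/
open Matrix
open scoped MatrixOrder

private lemma psd_det_nonneg {n : ℕ} {A : Matrix (Fin n) (Fin n) ℝ} (hA : A.PosSemidef) :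
    0 ≤ A.det := by
  rw [hA.1.det_eq_prod_eigenvalues]
  exact Finset.prod_nonneg fun i _ => hA.eigenvalues_nonneg i

private lemma amgm_aux (n : ℕ) (d : Fin n → ℝ) (h0 : ∀ i, 0 ≤ d i) (hs : ∑ i, d i = 1) :
    ∏ i, d i ≤ (1 / n : ℝ) ^ n := by
  have hn : 1 ≤ n := by
    by_contra h
    interval_cases n
    simpa using hs
  have hnpos : (0:ℝ) < n := by positivity
  have key := Real.geom_mean_le_arith_mean_weighted Finset.univ (fun _ => (1/n : ℝ)) d
    (fun i _ => by positivity) (by simp; field_simp) (fun i _ => h0 i)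
  have h1 : ∑ i, (1/n : ℝ) * d i = 1/n := by
    rw [← Finset.mul_sum, hs, mul_one]
  rw [h1] at key
  calc ∏ i, d i = (∏ i, d i ^ (1/n : ℝ)) ^ (n:ℕ) := by
        rw [Real.finset_prod_rpow _ _ (fun i _ => h0 i), ← Real.rpow_natCast _ n,
          ← Real.rpow_mul (Finset.prod_nonneg fun i _ => h0 i)]
        rw [one_div, inv_mul_cancel₀ (by positivity), Real.rpow_one]
    _ ≤ (1/n : ℝ) ^ n := by
        apply pow_le_pow_left₀ (Finset.prod_nonneg fun i _ => Real.rpow_nonneg (h0 i) _) key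

/-- Core: if `‖B u‖² ≤ c² ⟨H' u, u⟩` for all u, H' psd with trace 1, then `|det B| ≤ (c/√n)^n`. -/
private lemma det_bound_aux {n : ℕ} (c : ℝ) (hc : 0 ≤ c) (B H' : Matrix (Fin n) (Fin n) ℝ)
    (hH' : H'.PosSemidef) (htr : H'.trace = 1)
    (hkey : ∀ u : Fin n → ℝ,
      dotProduct (B.mulVec u) (B.mulVec u) ≤ c ^ 2 * dotProduct (H'.mulVec u) u) :
    |B.det| ≤ (c / Real.sqrt n) ^ n := by
  have hn : 1 ≤ n ∨ n = 0 := by omega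
  rcases hn with hn | rfl
  swap
  · simp [Matrix.det_fin_zero]
  have hG : (Bᴴ * B).PosSemidef := Matrix.posSemidef_conjTranspose_mul_self B
  have he := hG.1
  set v : Fin n → (Fin n → ℝ) := fun i => ⇑(he.eigenvectorBasis i) with hv
  set μ : Fin n → ℝ := he.eigenvalues with hμ
  set d : Fin n → ℝ := fun i => dotProduct (H'.mulVec (v i)) (v i) with hd
  have hdnn : ∀ i, 0 ≤ d i := fun i => by
    show 0 ≤ dotProduct (H'.mulVec (v i)) (v i)
    rw [dotProduct_comm]
    simpa using hH'.re_dotProduct_nonneg (v i)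
  -- μ i = ‖B v i‖²
  have keyre : ∀ (u : Fin n → ℝ),
      RCLike.re (dotProduct (star u) ((Bᴴ * B).mulVec u)) =
        dotProduct (B.mulVec u) (B.mulVec u) := by
    intro u
    have h1 : (Bᴴ * B).mulVec u = Bᵀ.mulVec (B.mulVec u) := by
      rw [← Matrix.mulVec_mulVec]; rfl
    rw [h1, star_trivial, Matrix.dotProduct_mulVec, Matrix.vecMul_transpose]
    rfl
  have hμeq : ∀ i, μ i = dotProduct (B.mulVec (v i)) (B.mulVec (v i)) := by
    intro i
    rw [hμ, he.eigenvalues_eq i]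
    exact keyre (v i)
  -- μ i ≤ c² d i
  have hμle : ∀ i, μ i ≤ c ^ 2 * d i := fun i => by rw [hμeq i]; exact hkey (v i)
  -- ∑ d = 1
  have hsum : ∑ i, d i = 1 := by
    set U : Matrix (Fin n) (Fin n) ℝ := (he.eigenvectorUnitary : Matrix (Fin n) (Fin n) ℝ)
    have hdi : ∀ i, d i = (star U * H' * U) i i := by
      intro i
      have hU : ∀ a b, U a b = v b a := fun a b => rfl
      simp only [hd, Matrix.mul_apply, Matrix.mulVec, dotProduct, Finset.sum_mul]
      rw [Finset.sum_comm]
      refine Finset.sum_congr rfl fun j _ => Finset.sum_congr rfl fun k _ => ?_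
      simp only [Matrix.star_apply, star_trivial, hU]
      ring
    calc ∑ i, d i = ∑ i, (star U * H' * U) i i := Finset.sum_congr rfl fun i _ => hdi i
      _ = (star U * H' * U).trace := by simp [Matrix.trace, Matrix.diag]
      _ = (U * star U * H').trace := (Matrix.trace_mul_cycle (star U) H' U)
      _ = H'.trace := by
          have hUU : U * star U = 1 :=
            (Matrix.mem_unitaryGroup_iff).mp he.eigenvectorUnitary.2
          rw [hUU, one_mul]
      _ = 1 := htr
  -- det bound
  have hdet2 : B.det ^ 2 = ∏ i, μ i := by
    have := he.det_eq_prod_eigenvalues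
    simp only [RCLike.ofReal_real_eq_id, id] at this
    rw [← hμ] at this
    rw [← this]
    rw [show Bᴴ = Bᵀ from rfl, Matrix.det_mul, Matrix.det_transpose, sq]
  have hprod : ∏ i, μ i ≤ c ^ (2 * n) * (1/n : ℝ) ^ n := by
    calc ∏ i, μ i ≤ ∏ i, c ^ 2 * d i := by
          apply Finset.prod_le_prod (fun i _ => hG.eigenvalues_nonneg i) (fun i _ => hμle i)
      _ = c ^ (2 * n) * ∏ i, d i := by
          rw [Finset.prod_mul_distrib, Finset.prod_const, Finset.card_univ, Fintype.card_fin,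
            ← pow_mul]
      _ ≤ c ^ (2 * n) * (1/n : ℝ) ^ n := by
          apply mul_le_mul_of_nonneg_left (amgm_aux n d hdnn hsum) (by positivity)
  have hnpos : (0:ℝ) < n := by positivity
  have hrhs : ((c / Real.sqrt n) ^ n) ^ 2 = c ^ (2 * n) * (1/n : ℝ) ^ n := by
    have h1 : (Real.sqrt n) ^ 2 = (n:ℝ) := Real.sq_sqrt hnpos.le
    rw [← pow_mul, mul_comm n 2, div_pow, pow_mul, pow_mul, h1, ← pow_mul]
    rw [one_div, inv_pow, div_eq_mul_inv]
  have : B.det ^ 2 ≤ ((c / Real.sqrt n) ^ n) ^ 2 := by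
    rw [hdet2, hrhs]; exact hprod
  have h2 : |B.det| ≤ |(c / Real.sqrt n) ^ n| := by
    rw [← Real.sqrt_sq_eq_abs, ← Real.sqrt_sq_eq_abs]
    exact Real.sqrt_le_sqrt this
  rwa [abs_of_nonneg (pow_nonneg (div_nonneg hc (Real.sqrt_nonneg _)) n)] at h2

private lemma symmdot {n : ℕ} (A : Matrix (Fin n) (Fin n) ℝ) (hA : Aᵀ = A) (x y : Fin n → ℝ) :
    dotProduct (A.mulVec x) y = dotProduct x (A.mulVec y) := by
  have h : ∀ z : Fin n → ℝ, Matrix.vecMul z A = A.mulVec z := by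
    intro z
    conv_lhs => rw [← hA]
    rw [Matrix.vecMul_transpose]
  rw [dotProduct_comm, Matrix.dotProduct_mulVec, h, dotProduct_comm]

/-- Lemma 2.4 (det-inequality) as a linear algebra fact. The differential `d_y f` is
represented by the matrix `f` (in orthonormal bases), `H` is symmetric positive definite
with all eigenvalues in `(0,1)` (encoded by `H` and `1 - H` positive definite), and `H'`
is symmetric positive semidefinite with trace `1`. If for all `u, v`
`|⟨(I - H)(f u), v⟩| ≤ c √⟨H v, v⟩ √⟨H' u, u⟩`, then
`|Jac f| ≤ (c/√n)ⁿ √(det H) / det(I - H)`. -/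
theorem stmt_4 (n : ℕ) (hn : 1 ≤ n) (c : ℝ) (hc : 0 ≤ c)
    (f H H' : Matrix (Fin n) (Fin n) ℝ)
    (hH : H.PosDef) (hH1 : (1 - H).PosDef)
    (hH' : H'.PosSemidef) (htr : H'.trace = 1)
    (hineq : ∀ u v : Fin n → ℝ,
      |dotProduct (((1 - H) * f).mulVec u) v| ≤
        c * Real.sqrt (dotProduct (H.mulVec v) v) *
          Real.sqrt (dotProduct (H'.mulVec u) u)) :
    |f.det| ≤ (c / Real.sqrt n) ^ n * Real.sqrt H.det / (1 - H).det := by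
  have hS0 : H.PosSemidef := hH.posSemidef
  set M : Matrix (Fin n) (Fin n) ℝ := (1 - H) * f with hM
  set S : Matrix (Fin n) (Fin n) ℝ := CFC.sqrt H with hSdef
  have hSpsd : S.PosSemidef := (CFC.sqrt_nonneg H).posSemidef
  have hSS : S * S = H := CFC.sqrt_mul_sqrt_self H hS0.nonneg
  have hSsym : Sᵀ = S := hSpsd.1
  have hdetS2 : S.det * S.det = H.det := by rw [← Matrix.det_mul, hSS]
  have hdetSnn : 0 ≤ S.det := psd_det_nonneg hSpsd
  have hdetSpos : 0 < S.det := by nlinarith [hH.det_pos]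
  have hUnit : IsUnit S.det := hdetSpos.ne'.isUnit
  have hSSinv : S * S⁻¹ = 1 := Matrix.mul_nonsing_inv S hUnit
  set B : Matrix (Fin n) (Fin n) ℝ := S⁻¹ * M with hB
  have hSB : S * B = M := by
    rw [hB, ← mul_assoc, hSSinv, one_mul]
  -- key inequality for B
  have hkey : ∀ u : Fin n → ℝ,
      dotProduct (B.mulVec u) (B.mulVec u) ≤
        c ^ 2 * dotProduct (H'.mulVec u) u := by
    intro u
    set w : Fin n → ℝ := B.mulVec u with hw
    set t : ℝ := dotProduct w w with ht
    have htnn : 0 ≤ t := by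
      rw [ht]
      exact Finset.sum_nonneg fun i _ => mul_self_nonneg _
    have hdnn : 0 ≤ dotProduct (H'.mulVec u) u := by
      rw [dotProduct_comm]
      simpa using hH'.re_dotProduct_nonneg u
    -- rewrite the pairing
    have hpair : dotProduct (M.mulVec u) (S⁻¹.mulVec w) = t := by
      rw [← hSB, ← Matrix.mulVec_mulVec, symmdot S hSsym, Matrix.mulVec_mulVec, hSSinv,
        Matrix.one_mulVec]
    have hHterm : dotProduct (H.mulVec (S⁻¹.mulVec w)) (S⁻¹.mulVec w) = t := by
      rw [Matrix.mulVec_mulVec, ← hSS, mul_assoc, hSSinv, mul_one, symmdot S hSsym,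
        Matrix.mulVec_mulVec, hSSinv, Matrix.one_mulVec]
    have h1 := hineq u (S⁻¹.mulVec w)
    rw [hpair, hHterm] at h1
    have h2 : t ≤ c * Real.sqrt t * Real.sqrt (dotProduct (H'.mulVec u) u) := by
      calc t = |t| := (abs_of_nonneg htnn).symm
        _ ≤ _ := h1
    have hst := Real.sq_sqrt htnn
    have hsd := Real.sq_sqrt hdnn
    nlinarith [sq_nonneg (Real.sqrt t - c * Real.sqrt (dotProduct (H'.mulVec u) u)),
      Real.sqrt_nonneg t, Real.sqrt_nonneg (dotProduct (H'.mulVec u) u)]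
  have hBdet : |B.det| ≤ (c / Real.sqrt n) ^ n := det_bound_aux c hc B H' hH' htr hkey
  -- assemble
  have hD1 : 0 < (1 - H).det := hH1.det_pos
  have hfd : (1 - H).det * f.det = S.det * B.det := by
    rw [← Matrix.det_mul, ← Matrix.det_mul, hSB]
  have hsqrt : Real.sqrt H.det = S.det := by
    rw [show H.det = S.det ^ 2 by rw [sq]; exact hdetS2.symm, Real.sqrt_sq hdetSnn]
  have hf : f.det = S.det * B.det / (1 - H).det := by
    field_simp
    linarith [hfd]
  rw [hf, abs_div, abs_of_pos hD1, abs_mul, abs_of_nonneg hdetSnn, hsqrt, mul_comm S.det]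
  gcongr
end

section
/- Let f : Y → X be a C¹ map between n-dimensional Riemannian manifolds satisfying, at a point y, the bilinear estimate |⟨(I - H_y)(d_yf(u)), v⟩| ≤ c·⟨H_y v, v⟩^{1/2}·‖u‖ for all unit u ∈ T_yY, v ∈ T_{f(y)}X, where H_y is symmetric positive definite with largest eigenvalue λₙ < 1. Then the operator norm of d_yf satisfies ‖d_yf‖ ≤ c·√λₙ / (1 - λₙ). -/
open Matrix

lemma quad_form_le_max {n : ℕ} {H : Matrix (Fin n) (Fin n) ℝ} (hH : H.IsHermitian)
    {μ : ℝ} (hμ : ∀ i, hH.eigenvalues i ≤ μ) (v : Fin n → ℝ) :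
    dotProduct (H.mulVec v) v ≤ μ * dotProduct v v := by
  set U : Matrix (Fin n) (Fin n) ℝ := (hH.eigenvectorUnitary : Matrix (Fin n) (Fin n) ℝ) with hU
  have hUU : U * star U = 1 := mem_unitaryGroup_iff.mp hH.eigenvectorUnitary.2
  have hspec : H = U * diagonal (RCLike.ofReal ∘ hH.eigenvalues) * star U :=
    hH.spectral_theorem
  have hdiag : (diagonal (fun i => μ - hH.eigenvalues i)).PosSemidef :=
    PosSemidef.diagonal (fun i => sub_nonneg.mpr (hμ i))
  have hps : (μ • (1 : Matrix (Fin n) (Fin n) ℝ) - H).PosSemidef := by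
    have : μ • (1 : Matrix (Fin n) (Fin n) ℝ) - H
        = U * diagonal (fun i => μ - hH.eigenvalues i) * star U := by
      have h1 : μ • (1 : Matrix (Fin n) (Fin n) ℝ)
          = U * (μ • (1 : Matrix (Fin n) (Fin n) ℝ)) * star U := by
        rw [mul_smul_comm, smul_mul_assoc, mul_one, hUU]
      have h2 : U * (μ • (1 : Matrix (Fin n) (Fin n) ℝ)) * star U
          - U * diagonal (RCLike.ofReal ∘ hH.eigenvalues) * star U
          = U * diagonal (fun i => μ - hH.eigenvalues i) * star U := by
        rw [← sub_mul, ← mul_sub, smul_one_eq_diagonal, diagonal_sub]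
        congr 1
      calc μ • (1 : Matrix (Fin n) (Fin n) ℝ) - H
          = U * (μ • (1 : Matrix (Fin n) (Fin n) ℝ)) * star U
            - U * diagonal (RCLike.ofReal ∘ hH.eigenvalues) * star U := by
            rw [← h1, ← hspec]
        _ = U * diagonal (fun i => μ - hH.eigenvalues i) * star U := h2
    rw [this]
    simpa [Matrix.star_eq_conjTranspose] using hdiag.mul_mul_conjTranspose_same U
  have := hps.dotProduct_mulVec_nonneg v
  simp only [star_trivial, sub_mulVec, dotProduct_sub, smul_mulVec, one_mulVec,
    dotProduct_smul, smul_eq_mul] at this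
  have hcomm : dotProduct v (H.mulVec v) = dotProduct (H.mulVec v) v :=
    dotProduct_comm _ _
  linarith [hcomm]

/-- Pointwise differential bound (inequality 2.11): if at a point the bilinear estimate
`|⟨(I - H)(f u), v⟩| ≤ c √⟨H v, v⟩ ‖u‖` holds, where `H` is symmetric positive definite
with largest eigenvalue `λₙ < 1`, then the operator norm of `d_y f` (represented by the
matrix `f` in orthonormal bases) satisfies `‖f‖ ≤ c √λₙ / (1 - λₙ)`. -/
theorem stmt_5 (n : ℕ) (c : ℝ) (hc : 0 ≤ c)
    (f H : Matrix (Fin n) (Fin n) ℝ) (hH : H.PosDef)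
    (i₀ : Fin n) (hmax : ∀ i, hH.1.eigenvalues i ≤ hH.1.eigenvalues i₀)
    (hlt : hH.1.eigenvalues i₀ < 1)
    (hineq : ∀ u v : Fin n → ℝ,
      |dotProduct (((1 - H) * f).mulVec u) v| ≤
        c * Real.sqrt (dotProduct (H.mulVec v) v) *
          Real.sqrt (dotProduct u u)) :
    ∀ u : Fin n → ℝ,
      Real.sqrt (dotProduct (f.mulVec u) (f.mulVec u)) ≤
        c * Real.sqrt (hH.1.eigenvalues i₀) / (1 - hH.1.eigenvalues i₀) *
          Real.sqrt (dotProduct u u) := by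
  intro u
  set lam := hH.1.eigenvalues i₀ with hlam
  have hlam0 : 0 ≤ lam := le_of_lt (hH.eigenvalues_pos i₀)
  have h1lam : 0 < 1 - lam := by linarith
  set v := f.mulVec u with hv
  set N := dotProduct v v with hN
  set Q := dotProduct (H.mulVec v) v with hQ
  have hN0 : 0 ≤ N := by simpa using dotProduct_star_self_nonneg v
  have hQ0 : 0 ≤ Q := by
    have := hH.posSemidef.dotProduct_mulVec_nonneg v
    simpa [hQ, dotProduct_comm] using this
  have hQle : Q ≤ lam * N := quad_form_le_max hH.1 hmax v
  have hkey : dotProduct (((1 - H) * f).mulVec u) v = N - Q := by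
    rw [← mulVec_mulVec, sub_mulVec, one_mulVec, sub_dotProduct]
  have habs := hineq u v
  rw [hkey] at habs
  have hNQ : N - Q ≤ |N - Q| := le_abs_self _
  have hsqQ : Real.sqrt Q ≤ Real.sqrt lam * Real.sqrt N := by
    rw [← Real.sqrt_mul hlam0]
    exact Real.sqrt_le_sqrt hQle
  have hchain : (1 - lam) * N ≤ c * (Real.sqrt lam * Real.sqrt N) *
      Real.sqrt (dotProduct u u) := by
    have h2 : N - Q ≤ c * Real.sqrt Q * Real.sqrt (dotProduct u u) :=
      hNQ.trans habs
    have h3 : c * Real.sqrt Q * Real.sqrt (dotProduct u u) ≤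
        c * (Real.sqrt lam * Real.sqrt N) * Real.sqrt (dotProduct u u) := by
      gcongr
    nlinarith
  have hsqN : Real.sqrt N * Real.sqrt N = N := Real.mul_self_sqrt hN0
  rcases eq_or_lt_of_le (Real.sqrt_nonneg N) with h0 | h0
  · rw [← h0]
    positivity
  · have : (1 - lam) * (Real.sqrt N * Real.sqrt N) ≤
        c * Real.sqrt lam * Real.sqrt (dotProduct u u) * Real.sqrt N := by
      rw [hsqN]; nlinarith [hchain]
    have h4 : (1 - lam) * Real.sqrt N ≤ c * Real.sqrt lam * Real.sqrt (dotProduct u u) := by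
      have := mul_le_mul_iff_of_pos_right h0 |>.mp (by linarith [this] :
        (1 - lam) * Real.sqrt N * Real.sqrt N ≤
          c * Real.sqrt lam * Real.sqrt (dotProduct u u) * Real.sqrt N)
      exact this
    rw [div_mul_eq_mul_div, le_div_iff₀ h1lam]
    linarith [h4]
end

section
/- Suppose two balls B₁, B₂ of radius r' in hyperbolic n-space have centers at distance ≤ 2ρr', 0 < ρ < 1, with r' below the injectivity radius. Then vol(B₁ ∪ B₂) ≤ (2·vol_{ℍⁿ}(r')/vol_{ℝⁿ}(r') − (1−ρ)ⁿ)·vol_{ℝⁿ}(r'), where vol_{ℝⁿ}(r') = ω_n r'ⁿ is the Euclidean ball volume. Consequently, if vol(B₁ ∪ B₂) ≥ 2ϑ·vol_{ℝⁿ}(r') for some ϑ close to 1 and r' ≤ ε, then (1−ρ)ⁿ ≤ 2(vol_{ℍⁿ}(ε)/vol_{ℝⁿ}(ε) − ϑ). -/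
open MeasureTheory

/-- Hyperbolic ball volume (up to the constant `vol(S^{n-1})`, shared with
`eucBallVol` so that all ratios are the true ones). -/
noncomputable def hypBallVol (n : ℕ) (r : ℝ) : ℝ :=
  ∫ t in (0 : ℝ)..r, Real.sinh t ^ (n - 1)

/-- Euclidean ball volume `ω_n rⁿ` (with the same normalizing constant as
`hypBallVol`). -/
noncomputable def eucBallVol (n : ℕ) (r : ℝ) : ℝ :=
  ∫ t in (0 : ℝ)..r, t ^ (n - 1)

lemma sinh_convex : ConvexOn ℝ (Set.Ici (0:ℝ)) Real.sinh := by
  apply convexOn_of_deriv2_nonneg (convex_Ici 0) Real.continuous_sinh.continuousOn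
  · exact Real.differentiable_sinh.differentiableOn
  · rw [Real.deriv_sinh]; exact Real.differentiable_cosh.differentiableOn
  · intro x hx
    rw [interior_Ici, Set.mem_Ioi] at hx
    simp only [Function.iterate_succ, Function.iterate_zero, Function.comp_apply, id_eq, Real.deriv_sinh, Real.deriv_cosh]
    exact (Real.sinh_nonneg_iff.2 hx.le)

lemma sinh_mul_le {c s : ℝ} (hc0 : 0 ≤ c) (hc1 : c ≤ 1) (hs : 0 ≤ s) :
    Real.sinh (c * s) ≤ c * Real.sinh s := by
  have := sinh_convex.2 (Set.mem_Ici.2 hs) (Set.mem_Ici.2 (le_refl (0:ℝ))) hc0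
    (by linarith : (0:ℝ) ≤ 1 - c) (by ring)
  simpa [smul_eq_mul] using this

lemma euc_eq (n : ℕ) (hn : 1 ≤ n) (r : ℝ) : eucBallVol n r = r ^ n / n := by
  rw [eucBallVol, integral_pow]
  rw [Nat.sub_add_cancel hn]
  rw [Nat.cast_sub hn]
  push_cast
  simp [zero_pow (by omega : n ≠ 0)]

lemma euc_pos (n : ℕ) (hn : 1 ≤ n) {r : ℝ} (hr : 0 < r) : 0 < eucBallVol n r := by
  rw [euc_eq n hn]
  positivity

lemma euc_le_hyp (n : ℕ) {r : ℝ} (hr : 0 ≤ r) : eucBallVol n r ≤ hypBallVol n r := by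
  apply intervalIntegral.integral_mono_on hr
  · exact (continuous_pow _).intervalIntegrable _ _
  · exact (Real.continuous_sinh.pow _).intervalIntegrable _ _
  · intro t ht
    exact pow_le_pow_left₀ ht.1 (Real.self_le_sinh_iff.2 ht.1) _

lemma hyp_scale (n : ℕ) (hn : 1 ≤ n) {r ε : ℝ} (hr : 0 < r) (hrε : r ≤ ε) :
    hypBallVol n r * ε ^ n ≤ hypBallVol n ε * r ^ n := by
  have hε : 0 < ε := lt_of_lt_of_le hr hrε
  set c := r / ε with hc
  have hc0 : 0 < c := div_pos hr hε
  have hc1 : c ≤ 1 := (div_le_one hε).2 hrε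
  have hcomp : (∫ s in (0:ℝ)..ε, Real.sinh (c * s) ^ (n-1)) = c⁻¹ * hypBallVol n r := by
    rw [intervalIntegral.integral_comp_mul_left (fun t => Real.sinh t ^ (n-1)) hc0.ne']
    rw [mul_zero, hc, div_mul_cancel₀ _ hε.ne']
    rfl
  have hmono : (∫ s in (0:ℝ)..ε, Real.sinh (c * s) ^ (n-1)) ≤
      ∫ s in (0:ℝ)..ε, (c * Real.sinh s) ^ (n-1) := by
    apply intervalIntegral.integral_mono_on hε.le
    · exact ((Real.continuous_sinh.comp (continuous_const.mul continuous_id)).pow _).intervalIntegrable _ _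
    · exact ((continuous_const.mul Real.continuous_sinh).pow _).intervalIntegrable _ _
    · intro t ht
      have h1 : 0 ≤ Real.sinh (c * t) := Real.sinh_nonneg_iff.2 (mul_nonneg hc0.le ht.1)
      exact pow_le_pow_left₀ h1 (sinh_mul_le hc0.le hc1 ht.1) _
  have hrhs : (∫ s in (0:ℝ)..ε, (c * Real.sinh s) ^ (n-1)) = c ^ (n-1) * hypBallVol n ε := by
    simp_rw [mul_pow]
    rw [intervalIntegral.integral_const_mul]
    rfl
  have key : hypBallVol n r ≤ c ^ n * hypBallVol n ε := by
    have := hmono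
    rw [hcomp, hrhs] at this
    have h2 : hypBallVol n r ≤ c * (c ^ (n-1) * hypBallVol n ε) := by
      calc hypBallVol n r = c * (c⁻¹ * hypBallVol n r) := by
            field_simp
        _ ≤ c * (c ^ (n-1) * hypBallVol n ε) := by
            exact mul_le_mul_of_nonneg_left this hc0.le
    calc hypBallVol n r ≤ c * (c ^ (n-1) * hypBallVol n ε) := h2
      _ = c ^ n * hypBallVol n ε := by
          rw [← mul_assoc, ← pow_succ', Nat.sub_add_cancel hn]
  calc hypBallVol n r * ε ^ n ≤ (c ^ n * hypBallVol n ε) * ε ^ n := by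
        apply mul_le_mul_of_nonneg_right key (by positivity)
    _ = hypBallVol n ε * r ^ n := by
        rw [hc, div_pow]
        field_simp

lemma ratio_mono (n : ℕ) (hn : 1 ≤ n) {r ε : ℝ} (hr : 0 < r) (hrε : r ≤ ε) :
    hypBallVol n r / eucBallVol n r ≤ hypBallVol n ε / eucBallVol n ε := by
  have hε : 0 < ε := lt_of_lt_of_le hr hrε
  rw [div_le_div_iff₀ (euc_pos n hn hr) (euc_pos n hn hε), euc_eq n hn, euc_eq n hn]
  have := hyp_scale n hn hr hrε
  have hn0 : (0:ℝ) < n := by exact_mod_cast hn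
  rw [← mul_div_assoc, ← mul_div_assoc]
  gcongr

/-- Quantitative overlap estimate (core of Lemma 4.4): two balls of radius `r'` in
hyperbolic `n`-space (modelled by a metric measure space in which balls of radius
`≤ rinj` have exactly hyperbolic volume, and midpoints exist) whose centers are at
distance `≤ 2ρr'` satisfy
`vol(B₁ ∪ B₂) ≤ (2 vol_ℍ(r')/vol_ℝ(r') − (1−ρ)ⁿ)·vol_ℝ(r')`; consequently if
`vol(B₁ ∪ B₂) ≥ 2ϑ vol_ℝ(r')` and `r' ≤ ε` then
`(1−ρ)ⁿ ≤ 2 (vol_ℍ(ε)/vol_ℝ(ε) − ϑ)`. -/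
theorem stmt_11 {X : Type*} [MetricSpace X] [MeasurableSpace X] [BorelSpace X]
    (μ : Measure X) (n : ℕ) (hn : 1 ≤ n) (rinj : ℝ)
    (hvol : ∀ (x : X) (r : ℝ), 0 < r → r ≤ rinj →
      (μ (Metric.ball x r)).toReal = hypBallVol n r ∧ μ (Metric.ball x r) ≠ ⊤)
    (ρ r' ε ϑ : ℝ) (hρ0 : 0 < ρ) (hρ1 : ρ < 1) (hr'0 : 0 < r') (hr'inj : r' ≤ rinj)
    (x₁ x₂ : X) (hd : dist x₁ x₂ ≤ 2 * ρ * r')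
    (hmid : ∃ x : X, dist x x₁ ≤ ρ * r' ∧ dist x x₂ ≤ ρ * r') :
    (μ (Metric.ball x₁ r' ∪ Metric.ball x₂ r')).toReal ≤
      (2 * hypBallVol n r' / eucBallVol n r' - (1 - ρ) ^ n) * eucBallVol n r' ∧
    (0 < ε → r' ≤ ε →
      2 * ϑ * eucBallVol n r' ≤ (μ (Metric.ball x₁ r' ∪ Metric.ball x₂ r')).toReal →
      (1 - ρ) ^ n ≤ 2 * (hypBallVol n ε / eucBallVol n ε - ϑ)) := by
  obtain ⟨x, hx1, hx2⟩ := hmid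
  set s : ℝ := (1 - ρ) * r' with hs_def
  have h1ρ : 0 < 1 - ρ := by linarith
  have hs0 : 0 < s := mul_pos h1ρ hr'0
  have hsr' : s ≤ r' := by nlinarith
  have h1 := hvol x₁ r' hr'0 hr'inj
  have h2 := hvol x₂ r' hr'0 hr'inj
  have hB := hvol x s hs0 (hsr'.trans hr'inj)
  have hsub : Metric.ball x s ⊆ Metric.ball x₁ r' ∩ Metric.ball x₂ r' := by
    intro y hy
    rw [Metric.mem_ball] at hy
    constructor
    · rw [Metric.mem_ball]
      calc dist y x₁ ≤ dist y x + dist x x₁ := dist_triangle _ _ _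
        _ < s + ρ * r' := by linarith
        _ = r' := by ring
    · rw [Metric.mem_ball]
      calc dist y x₂ ≤ dist y x + dist x x₂ := dist_triangle _ _ _
        _ < s + ρ * r' := by linarith
        _ = r' := by ring
  have hUfin : μ (Metric.ball x₁ r' ∪ Metric.ball x₂ r') ≠ ⊤ :=
    ne_top_of_le_ne_top (ENNReal.add_ne_top.2 ⟨h1.2, h2.2⟩) (measure_union_le _ _)
  have hkey' : μ (Metric.ball x₁ r' ∪ Metric.ball x₂ r') + μ (Metric.ball x s)
      ≤ μ (Metric.ball x₁ r') + μ (Metric.ball x₂ r') := by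
    calc μ (Metric.ball x₁ r' ∪ Metric.ball x₂ r') + μ (Metric.ball x s)
        ≤ μ (Metric.ball x₁ r' ∪ Metric.ball x₂ r')
          + μ (Metric.ball x₁ r' ∩ Metric.ball x₂ r') :=
          add_le_add_right (measure_mono hsub) _
      _ = μ (Metric.ball x₁ r') + μ (Metric.ball x₂ r') :=
          measure_union_add_inter _ measurableSet_ball
  have hkey : (μ (Metric.ball x₁ r' ∪ Metric.ball x₂ r')).toReal + (μ (Metric.ball x s)).toReal
      ≤ hypBallVol n r' + hypBallVol n r' := by
    have h := (ENNReal.toReal_le_toReal (ENNReal.add_ne_top.2 ⟨hUfin, hB.2⟩)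
      (ENNReal.add_ne_top.2 ⟨h1.2, h2.2⟩)).2 hkey'
    rwa [ENNReal.toReal_add hUfin hB.2, ENNReal.toReal_add h1.2 h2.2, h1.1, h2.1] at h
  have hBeuc : eucBallVol n s = (1 - ρ) ^ n * eucBallVol n r' := by
    rw [euc_eq n hn, euc_eq n hn, hs_def, mul_pow]
    ring
  have hBlow : (1 - ρ) ^ n * eucBallVol n r' ≤ (μ (Metric.ball x s)).toReal := by
    rw [hB.1, ← hBeuc]
    exact euc_le_hyp n hs0.le
  have heucpos := euc_pos n hn hr'0
  have hmain : (μ (Metric.ball x₁ r' ∪ Metric.ball x₂ r')).toReal ≤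
      2 * hypBallVol n r' - (1 - ρ) ^ n * eucBallVol n r' := by
    linarith
  constructor
  · calc (μ (Metric.ball x₁ r' ∪ Metric.ball x₂ r')).toReal
        ≤ 2 * hypBallVol n r' - (1 - ρ) ^ n * eucBallVol n r' := hmain
      _ = (2 * hypBallVol n r' / eucBallVol n r' - (1 - ρ) ^ n) * eucBallVol n r' := by
          field_simp
  · intro hε0 hr'ε hϑ
    have hratio := ratio_mono n hn hr'0 hr'ε
    have hstep : (1 - ρ) ^ n ≤ 2 * (hypBallVol n r' / eucBallVol n r' - ϑ) := by
      have h3 : 2 * ϑ * eucBallVol n r' ≤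
          2 * hypBallVol n r' - (1 - ρ) ^ n * eucBallVol n r' := le_trans hϑ hmain
      have h5 : hypBallVol n r' / eucBallVol n r' * eucBallVol n r'
          = hypBallVol n r' := by field_simp
      have h4 : (1 - ρ) ^ n * eucBallVol n r' ≤
          2 * (hypBallVol n r' / eucBallVol n r' - ϑ) * eucBallVol n r' := by
        nlinarith [h5]
      exact le_of_mul_le_mul_right h4 heucpos
    linarith
end
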